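/- If q_0, ..., q_{s-1} is a sequence of positive integers with either both q_0 ≥ 2 and q_{s-1} ≥ 2, or q_0 = q_{s-1} = 1, then |[q_0, ..., q_{s-1}]*| < (1/2)·[q_0, ..., q_{s-1}], i.e., the absolute value of the anticontinuant is less than half the continuant. -/

import Mathlib

/-- The continuant of a finite sequence of integers. -/
def cont : List ℤ → ℤ
  | [] => 1
  | [a] => a
  | a :: b :: l => a * cont (b :: l) + cont l


/-- The anticontinuant `[q₀,…,q_{s-1}]* = [q₀,…,q_{s-2}] − [q₁,…,q_{s-1}]`. -/
def anticont (l : List ℤ) : ℤ := cont l.dropLast - cont l.tail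

lemma cc (a b : ℤ) (l : List ℤ) : cont (a :: b :: l) = a * cont (b :: l) + cont l := rfl

lemma olc : ∀ (l : List ℤ), (∀ q ∈ l, 0 < q) → 1 ≤ cont l
  | [], _ => le_refl 1
  | [a], h => h a (by simp)
  | a :: b :: t, h => by
    have h1 := olc (b :: t) (fun q hq => h q (by simp_all))
    have h2 := olc t (fun q hq => h q (by simp_all))
    have ha := h a (by simp)
    rw [cc]; nlinarith

lemma ccat : ∀ (l : List ℤ) (a : ℤ), l ≠ [] → cont (l ++ [a]) = a * cont l + cont l.dropLast
  | [b], a, _ => by simp [cont]; ring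
  | [b, c], a, _ => by simp [cont]; ring
  | b :: c :: d :: t, a, _ => by
    have h1 := ccat (c :: d :: t) a (by simp)
    have h2 := ccat (d :: t) a (by simp)
    simp only [List.cons_append] at h1 h2 ⊢
    have hd : (b :: c :: d :: t).dropLast = b :: c :: (d :: t).dropLast := by simp
    have hd2 : (c :: d :: t).dropLast = c :: (d :: t).dropLast := by simp
    rw [hd2] at h1
    rw [hd, cc b, cc b, h1, h2, cc b c ((d :: t).dropLast)]
    ring

lemma ctl : ∀ (l : List ℤ), (∀ q ∈ l, 0 < q) → cont l.tail ≤ cont l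
  | [], _ => le_refl 1
  | [a], h => by have := h a (by simp); simp [cont]; omega
  | a :: b :: t, h => by
    have h1 := olc (b :: t) (fun q hq => h q (by simp_all))
    have h2 := olc t (fun q hq => h q (by simp_all))
    have ha := h a (by simp)
    simp only [List.tail_cons, cc]; nlinarith

lemma cdl : ∀ (l : List ℤ), (∀ q ∈ l, 0 < q) → cont l.dropLast ≤ cont l
  | [], _ => le_refl 1
  | [a], h => by have := h a (by simp); simp [cont]; omega
  | [a, b], h => by
    have ha := h a (by simp); have hb := h b (by simp)
    simp [cont]; nlinarith
  | a :: b :: c :: t, h => by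
    have h1 := cdl (b :: c :: t) (fun q hq => h q (by simp_all))
    have ha := h a (by simp)
    have hp1 := olc (b :: c :: t) (fun q hq => h q (by simp_all))
    have hp2 := olc ((c :: t).dropLast)
      (fun q hq => h q (by
        have := (List.dropLast_sublist (c :: t)).subset hq
        simp_all))
    have hp3 := olc (c :: t) (fun q hq => h q (by simp_all))
    have hd : (a :: b :: c :: t).dropLast = a :: b :: (c :: t).dropLast := by simp
    have hd2 : (b :: c :: t).dropLast = b :: (c :: t).dropLast := by simp
    rw [hd2] at h1
    have h2 := cdl (c :: t) (fun q hq => h q (by simp_all))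
    rw [hd, cc, cc a b (c :: t)]
    nlinarith [mul_le_mul_of_nonneg_left h1 ha.le]

lemma aux_main (l : List ℤ) (hne : l ≠ []) (hpos : ∀ q ∈ l, 0 < q)
    (hends : (2 ≤ l.head! ∧ 2 ≤ l.getLast!) ∨ (l.head! = 1 ∧ l.getLast! = 1)) :
    2 * |cont l.dropLast - cont l.tail| < cont l := by
  match l, hne with
  | [q], _ =>
    have hq := hpos q (by simp)
    simp [cont]
    omega
  | q :: x :: t, _ =>
    have hlne : (q :: x :: t) ≠ [] := by simp
    have hl := List.dropLast_append_getLast hlne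
    set a := (q :: x :: t).getLast hlne with ha_def
    set D := (q :: x :: t).dropLast with hD_def
    have hDne : D ≠ [] := by rw [hD_def]; simp
    have hhead : (q :: x :: t).head! = q := rfl
    have hlast : (q :: x :: t).getLast! = a := by
      conv_lhs => rw [← hl]
      exact List.getLast!_of_getLast? List.getLast?_concat
    have posT : ∀ p ∈ x :: t, 0 < p := fun p hp => hpos p (List.mem_cons_of_mem _ hp)
    have post : ∀ p ∈ t, 0 < p := fun p hp => posT p (List.mem_cons_of_mem _ hp)
    have posD : ∀ p ∈ D, 0 < p := fun p hp => hpos p ((List.dropLast_sublist _).subset hp)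
    have posDd : ∀ p ∈ D.dropLast, 0 < p := fun p hp => posD p ((List.dropLast_sublist _).subset hp)
    have h1T := olc (x :: t) posT
    have h1t := olc t post
    have h1D := olc D posD
    have h1Dd := olc D.dropLast posDd
    have hq := hpos q (by simp)
    have hKl : cont (q :: x :: t) = q * cont (x :: t) + cont t := rfl
    have hKl' : cont (q :: x :: t) = a * cont D + cont D.dropLast := by
      conv_lhs => rw [← hl]
      exact ccat D a hDne
    simp only [List.dropLast_cons₂, List.tail_cons]
    rcases hends with ⟨h2q, h2a⟩ | ⟨h1q, h1a⟩
    · rw [hhead] at h2q; rw [hlast] at h2a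
      have htail : 2 * cont (x :: t) < cont (q :: x :: t) := by rw [hKl]; nlinarith
      have hdrop : 2 * cont D < cont (q :: x :: t) := by rw [hKl']; nlinarith
      rcases abs_cases (cont D - cont (x :: t)) with ⟨he, _⟩ | ⟨he, _⟩ <;> rw [he] <;> linarith
    · rw [hhead] at h1q; rw [hlast] at h1a
      subst h1q
      match t with
      | [] =>
        have hx : x = 1 := by
          rw [ha_def] at h1a
          simpa [List.getLast] using h1a
        subst hx
        have hD1 : D = [1] := by rw [hD_def]; simp
        rw [hD1]
        norm_num [cont]
      | y :: r =>
        have hDm : D = 1 :: x :: (y :: r).dropLast := by rw [hD_def]; simp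
        set mt := (y :: r).dropLast with hmt_def
        set m := x :: mt with hm_def
        have hconcat : m ++ [1] = x :: y :: r := by
          have : D ++ [a] = 1 :: x :: y :: r := hl
          rw [hDm, h1a] at this
          simpa [hm_def] using this
        have hyr : mt ++ [1] = y :: r := by
          have := hconcat
          rw [hm_def] at this
          simpa using this
        have posm : ∀ p ∈ m, 0 < p := fun p hp => posT p (by rw [← hconcat]; exact List.mem_append_left _ hp)
        have posmt : ∀ p ∈ mt, 0 < p := fun p hp => posm p (List.mem_cons_of_mem _ hp)
        have posmd : ∀ p ∈ m.dropLast, 0 < p := fun p hp => posm p ((List.dropLast_sublist _).subset hp)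
        have posmtd : ∀ p ∈ mt.dropLast, 0 < p := fun p hp => posmt p ((List.dropLast_sublist _).subset hp)
        have h1m := olc m posm
        have h1mt := olc mt posmt
        have h1md := olc m.dropLast posmd
        have hmtle := ctl m posm
        have hmdle := cdl m posm
        have eT : cont (x :: y :: r) = cont m + cont m.dropLast := by
          rw [← hconcat, ccat m 1 (by simp [hm_def])]; ring
        have eD : cont D = cont m + cont mt := by
          rw [hDm, hm_def, cc 1 x mt]; ring
        have eL : cont (1 :: x :: y :: r) = cont (x :: y :: r) + cont (y :: r) := by
          rw [cc]; ring
        have hmttail : m.tail = mt := by rw [hm_def]; simp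
        rw [hmttail] at hmtle
        match mt, hyr, posmt, posmtd, h1mt, hmtle, eD with
        | [], hyr, _, _, _, hmtle, eD =>
          have hy1 : y = 1 ∧ r = [] := by
            constructor
            · have := hyr; simp at this; tauto
            · have := hyr; simp at this; tauto
          obtain ⟨hy, hr⟩ := hy1
          subst hy; subst hr
          have eyr : cont ([1] : List ℤ) = 1 := rfl
          rcases abs_cases (cont D - cont [x, 1]) with ⟨he, _⟩ | ⟨he, _⟩ <;> rw [he] <;>
            [skip; skip] <;>
            (rw [eL]
             have : cont ([x, 1] : List ℤ) = cont m + cont m.dropLast := eT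
             have e_nil : cont ([] : List ℤ) = 1 := rfl
             linarith [this, eD, h1m, h1md, hmdle, eyr, e_nil])
        | z :: w, hyr, posmt, posmtd, h1mt, hmtle, eD =>
          have eyr : cont (y :: r) = cont (z :: w) + cont (z :: w).dropLast := by
            rw [← hyr, ccat (z :: w) 1 (by simp)]; ring
          have h1mtd := olc (z :: w).dropLast posmtd
          rcases abs_cases (cont D - cont (x :: y :: r)) with ⟨he, _⟩ | ⟨he, _⟩ <;> rw [he] <;>
            (rw [eL]; linarith [eT, eD, eyr, h1m, h1mt, h1md, h1mtd, hmtle, hmdle])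

/-- If either both end quotients are ≥ 2 or both equal 1, then the absolute value of the
anticontinuant is less than half the continuant. -/
theorem abs_anticont_lt_half_cont (l : List ℤ) (hne : l ≠ []) (hpos : ∀ q ∈ l, 0 < q)
    (hends : (2 ≤ l.head! ∧ 2 ≤ l.getLast!) ∨ (l.head! = 1 ∧ l.getLast! = 1)) :
    2 * |anticont l| < cont l := by
  simpa [anticont] using aux_main l hne hpos hends
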